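/- The function u(t,x) = A·sech^{2/3}(K(x - x₀) - ωt), with A > 0, ε > 0, K = 3(A³/(40ε))^{1/2}, and ω = K(1 + A³/10), satisfies the generalized KdV equation u_t + u_x + u³u_x + ε u_{xxx} = 0 wherever u is defined. -/

import Mathlib

noncomputable def sech (z : ℝ) : ℝ := 2 / (Real.exp z + Real.exp (-z))

namespace GKdVAux

noncomputable def ch (z : ℝ) : ℝ := Real.exp z + Real.exp (-z)
noncomputable def sh (z : ℝ) : ℝ := Real.exp z - Real.exp (-z)
noncomputable def P (z : ℝ) : ℝ := sech z ^ ((2 : ℝ) / 3)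
noncomputable def T (z : ℝ) : ℝ := sh z / ch z

lemma ch_pos (z : ℝ) : 0 < ch z := by
  have := Real.exp_pos z; have := Real.exp_pos (-z); unfold ch; linarith

lemma sech_pos (z : ℝ) : 0 < sech z := by
  unfold sech; positivity

lemma hasDerivAt_ch (z : ℝ) : HasDerivAt ch (sh z) z := by
  have h1 := Real.hasDerivAt_exp z
  have h2 := (Real.hasDerivAt_exp (-z)).comp z (hasDerivAt_neg z)
  have := h1.add h2
  exact this.congr_deriv (by unfold sh; ring)

lemma hasDerivAt_sh (z : ℝ) : HasDerivAt sh (ch z) z := by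
  have h1 := Real.hasDerivAt_exp z
  have h2 := (Real.hasDerivAt_exp (-z)).comp z (hasDerivAt_neg z)
  have := h1.sub h2
  exact this.congr_deriv (by unfold ch; ring)

lemma hasDerivAt_sech (z : ℝ) :
    HasDerivAt sech (-(sech z * T z)) z := by
  have hc := ch_pos z
  have h := (hasDerivAt_const z (2 : ℝ)).div (hasDerivAt_ch z) hc.ne'
  have : ((fun _ => (2 : ℝ)) / ch) = sech := rfl
  rw [this] at h
  refine h.congr_deriv ?_
  unfold sech T
  field_simp
  unfold ch; ring

lemma hasDerivAt_P (z : ℝ) :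
    HasDerivAt P (-(2 / 3 * (P z * T z))) z := by
  have h := (hasDerivAt_sech z).rpow_const (p := (2 : ℝ) / 3)
    (Or.inl (sech_pos z).ne')
  refine h.congr_deriv ?_
  have hs : sech z ^ ((2 : ℝ) / 3 - 1) * sech z = P z := by
    rw [← Real.rpow_add_one (sech_pos z).ne']
    norm_num [P]
  calc -(sech z * T z) * ((2:ℝ)/3) * sech z ^ ((2:ℝ)/3 - 1)
      = -(2/3 * ((sech z ^ ((2:ℝ)/3 - 1) * sech z) * T z)) := by ring
    _ = -(2 / 3 * (P z * T z)) := by rw [hs]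

lemma hasDerivAt_T (z : ℝ) : HasDerivAt T (1 - T z ^ 2) z := by
  have hc := ch_pos z
  have h := (hasDerivAt_sh z).div (hasDerivAt_ch z) hc.ne'
  refine h.congr_deriv ?_
  unfold T
  field_simp

lemma hasDerivAt_Q (z : ℝ) :
    HasDerivAt (fun y => P y * T y) (P z - 5 / 3 * (P z * T z ^ 2)) z := by
  have h := (hasDerivAt_P z).mul (hasDerivAt_T z)
  refine h.congr_deriv ?_; ring

lemma hasDerivAt_R (z : ℝ) :
    HasDerivAt (fun y => P y - 5 / 3 * (P y * T y ^ 2))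
      (-4 * (P z * T z) + 40 / 9 * (P z * T z ^ 3)) z := by
  have hT2 : HasDerivAt (fun y => T y ^ 2) (2 * T z ^ 1 * (1 - T z ^ 2)) z := by
    exact ((hasDerivAt_T z).pow 2).congr_deriv (by norm_num)
  have h := (hasDerivAt_P z).sub
    (((hasDerivAt_P z).mul hT2).const_mul (5 / 3 : ℝ))
  refine h.congr_deriv ?_; ring

lemma sech_sq (z : ℝ) : sech z ^ 2 = 1 - T z ^ 2 := by
  have hc := (ch_pos z).ne'
  have he : Real.exp z * Real.exp (-z) = 1 := by
    rw [← Real.exp_add]; simp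
  unfold sech T sh ch
  unfold ch at hc
  field_simp
  nlinarith [he]

lemma P_cube (z : ℝ) : P z ^ 3 = 1 - T z ^ 2 := by
  have h : P z ^ 3 = sech z ^ 2 := by
    have h1 : P z ^ (3 : ℕ) = P z ^ ((3 : ℕ) : ℝ) := (Real.rpow_natCast _ 3).symm
    rw [h1, P, ← Real.rpow_mul (sech_pos z).le]
    norm_num
  rw [h, sech_sq]

end GKdVAux

open GKdVAux

theorem gkdv_soliton_exact_solution (A ε x₀ : ℝ) (hA : 0 < A) (hε : 0 < ε)
    (K ω : ℝ) (hK : K = 3 * Real.sqrt (A ^ 3 / (40 * ε)))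
    (hω : ω = K * (1 + A ^ 3 / 10))
    (u : ℝ → ℝ → ℝ)
    (hu : ∀ t x, u t x = A * (sech (K * (x - x₀) - ω * t)) ^ ((2 : ℝ) / 3)) :
    ∀ t x : ℝ,
      deriv (fun t' => u t' x) t + deriv (fun x' => u t x') x
        + (u t x) ^ 3 * deriv (fun x' => u t x') x
        + ε * deriv^[3] (fun x' => u t x') x = 0 := by
  intro t x
  set z : ℝ → ℝ := fun y => K * (y - x₀) - ω * t with hzdef
  have hz : ∀ y, HasDerivAt z K y := by
    intro y
    have : HasDerivAt (fun y => K * (y - x₀)) (K * 1) y :=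
      ((hasDerivAt_id y).sub_const x₀).const_mul K
    exact (this.sub_const (ω * t)).congr_deriv (by ring)
  -- spatial function equals A * P ∘ z
  have hux : (fun x' => u t x') = fun x' => A * P (z x') := by
    funext y; rw [hu]; rfl
  -- time derivative
  have hw : HasDerivAt (fun t' => K * (x - x₀) - ω * t') (-ω) t := by
    have : HasDerivAt (fun t' : ℝ => ω * t') (ω * 1) t := (hasDerivAt_id t).const_mul ω
    exact ((hasDerivAt_const t (K * (x - x₀))).sub this).congr_deriv (by ring)
  have hut : (fun t' => u t' x) = fun t' => A * P (K * (x - x₀) - ω * t') := by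
    funext s; rw [hu]; rfl
  have hwt : K * (x - x₀) - ω * t = z x := rfl
  have hdt : deriv (fun t' => u t' x) t = A * (-(2 / 3 * (P (z x) * T (z x))) * -ω) := by
    rw [hut]
    have h : HasDerivAt (fun t' => A * P (K * (x - x₀) - ω * t'))
        (A * (-(2 / 3 * (P (z x) * T (z x))) * -ω)) t :=
      by have h0 := (hasDerivAt_P (z x)).comp t hw; exact h0.const_mul A
    exact h.deriv
  -- first spatial derivative as a function
  have e1 : deriv (fun x' => u t x') =
      fun y => -(2 / 3) * A * K * (P (z y) * T (z y)) := by
    rw [hux]; funext y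
    have h : HasDerivAt (fun x' => A * P (z x'))
        (A * (-(2 / 3 * (P (z y) * T (z y))) * K)) y :=
      ((hasDerivAt_P (z y)).comp y (hz y)).const_mul A
    rw [h.deriv]; ring
  have e2 : deriv (fun y => -(2 / 3) * A * K * (P (z y) * T (z y))) =
      fun y => -(2 / 3) * A * K ^ 2 * (P (z y) - 5 / 3 * (P (z y) * T (z y) ^ 2)) := by
    funext y
    have h : HasDerivAt (fun y => -(2 / 3) * A * K * (P (z y) * T (z y)))
        (-(2 / 3) * A * K * ((P (z y) - 5 / 3 * (P (z y) * T (z y) ^ 2)) * K)) y :=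
      ((hasDerivAt_Q (z y)).comp y (hz y)).const_mul (-(2 / 3) * A * K)
    rw [h.deriv]; ring
  have hd3 : deriv^[3] (fun x' => u t x') x =
      -(2 / 3) * A * K ^ 3 *
        (-4 * (P (z x) * T (z x)) + 40 / 9 * (P (z x) * T (z x) ^ 3)) := by
    show deriv (deriv (deriv (fun x' => u t x'))) x = _
    rw [e1, e2]
    have h : HasDerivAt (fun y => -(2 / 3) * A * K ^ 2 * (P (z y) - 5 / 3 * (P (z y) * T (z y) ^ 2)))
        (-(2 / 3) * A * K ^ 2 * ((-4 * (P (z x) * T (z x)) + 40 / 9 * (P (z x) * T (z x) ^ 3)) * K)) x :=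
      ((hasDerivAt_R (z x)).comp x (hz x)).const_mul (-(2 / 3) * A * K ^ 2)
    rw [h.deriv]; ring
  have hdx : deriv (fun x' => u t x') x = -(2 / 3) * A * K * (P (z x) * T (z x)) := by
    rw [e1]
  have huval : u t x = A * P (z x) := by rw [hu]; rfl
  -- key algebraic facts
  have hKsq : ε * K ^ 2 = 9 * A ^ 3 / 40 := by
    rw [hK, mul_pow, Real.sq_sqrt (by positivity : (0:ℝ) ≤ A ^ 3 / (40 * ε))]
    field_simp
    ring
  have hp3 := P_cube (z x)
  rw [hdt, hdx, hd3, huval, hω]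
  set p := P (z x)
  set q := T (z x)
  linear_combination (K * A * (8 / 3 * p * q - 80 / 27 * p * q ^ 3)) * hKsq +
    (-(2 / 3) * A ^ 4 * K * p * q) * hp3
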